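/- arXiv:2201.08737 — 2 statements merged into one kernel-verified Lean document; each statement's English description precedes it below -/
import Mathlib

section
/- Let L_{[1]},…,L_{[N]} be reals with |L_{[1]}| ≥ … ≥ |L_{[N]}| and λ real. If ∑ᵢ₌₁^{k-1} L_{[i]} - (N-k+1)·|L_{[k-1]}| < λ, then ∑ᵢ₌₁^{k-2} L_{[i]} - (N-k+2)·|L_{[k-2]}| < λ, for any k with 3 ≤ k ≤ N+1. -/
/-- In the OT scheme, if the FC cannot decide H₁ after the first
k-1 transmissions (lower bound below λ), it could not decide H₁ after the first
k-2 transmissions either. -/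
theorem cannot_decide_H1_monotone (N : ℕ) (L : ℕ → ℝ) (lam : ℝ)
    (hord : ∀ i j, 1 ≤ i → i ≤ j → j ≤ N → |L j| ≤ |L i|)
    (k : ℕ) (hk3 : 3 ≤ k) (hkN : k ≤ N + 1)
    (h : (∑ i ∈ Finset.Icc 1 (k - 1), L i) - ((N : ℝ) - k + 1) * |L (k - 1)| < lam) :
    (∑ i ∈ Finset.Icc 1 (k - 2), L i) - ((N : ℝ) - k + 2) * |L (k - 2)| < lam := by
  have hk1 : k - 1 = (k - 2) + 1 := by omega
  have hsum : (∑ i ∈ Finset.Icc 1 (k - 1), L i)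
      = (∑ i ∈ Finset.Icc 1 (k - 2), L i) + L (k - 1) := by
    rw [hk1, Finset.sum_Icc_succ_top (by omega : 1 ≤ (k - 2) + 1), ← hk1]
  have habs : |L (k - 1)| ≤ |L (k - 2)| :=
    hord (k - 2) (k - 1) (by omega) (by omega) (by omega)
  have hNk : (0 : ℝ) ≤ (N : ℝ) - k + 1 := by
    have : (k : ℝ) ≤ (N : ℝ) + 1 := by exact_mod_cast hkN
    linarith
  have hmul : ((N : ℝ) - k + 1) * |L (k - 1)| ≤ ((N : ℝ) - k + 1) * |L (k - 2)| :=
    mul_le_mul_of_nonneg_left habs hNk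
  have hb : -|L (k - 1)| ≤ L (k - 1) := neg_abs_le _
  linarith [hsum, h, hmul, hb, habs]
end

section
/- Let x₁ ≥ … ≥ x_N be reals with mean x̄ and empirical variance v = (1/(N-1))∑(xᵢ-x̄)². For any k ∈ {1,…,N}, with cᵢ = 1 for i ≤ k and cᵢ = 0 for i > k, the sum of the k largest values satisfies k·x̄ - √(k(1 - k/N)(N-1)v) ≤ ∑ᵢ₌₁ᵏ xᵢ ≤ k·x̄ + √(k(1 - k/N)(N-1)v). -/
/-- Bounds on the sum of the k largest values:
k·x̄ - √(k(1-k/N)(N-1)v) ≤ ∑ᵢ₌₁ᵏ xᵢ ≤ k·x̄ + √(k(1-k/N)(N-1)v). -/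
theorem top_k_sum_bounds (N : ℕ) (hN : 1 ≤ N) (x : ℕ → ℝ)
    (hord : ∀ i j, 1 ≤ i → i ≤ j → j ≤ N → x j ≤ x i)
    (xbar v : ℝ)
    (hxbar : xbar = (∑ i ∈ Finset.Icc 1 N, x i) / N)
    (hv : v = (1 / ((N : ℝ) - 1)) * ∑ i ∈ Finset.Icc 1 N, (x i - xbar) ^ 2)
    (k : ℕ) (hk1 : 1 ≤ k) (hkN : k ≤ N) :
    (k : ℝ) * xbar - Real.sqrt ((k : ℝ) * (1 - (k : ℝ) / N) * ((N : ℝ) - 1) * v)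
        ≤ ∑ i ∈ Finset.Icc 1 k, x i
    ∧ ∑ i ∈ Finset.Icc 1 k, x i
        ≤ (k : ℝ) * xbar + Real.sqrt ((k : ℝ) * (1 - (k : ℝ) / N) * ((N : ℝ) - 1) * v) := by
  have hNpos : (0:ℝ) < N := by exact_mod_cast Nat.lt_of_lt_of_le Nat.zero_lt_one hN
  have hN0 : (N:ℝ) ≠ 0 := ne_of_gt hNpos
  have hIcc : ∀ m : ℕ, Finset.Icc 1 m = Finset.Ioc 0 m := fun m => by
    rw [← Finset.Icc_add_one_left_eq_Ioc]; rfl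
  set S := ∑ i ∈ Finset.Icc 1 N, (x i - xbar) ^ 2 with hSdef
  have hSnn : 0 ≤ S := Finset.sum_nonneg fun i _ => sq_nonneg _
  have hsplit : ∀ g : ℕ → ℝ,
      (∑ i ∈ Finset.Ioc 0 k, g i) + (∑ i ∈ Finset.Ioc k N, g i)
        = ∑ i ∈ Finset.Ioc 0 N, g i :=
    fun g => Finset.sum_Ioc_consecutive _ (Nat.zero_le k) hkN
  set c : ℕ → ℝ := fun i => (if i ≤ k then (1:ℝ) else 0) - (k:ℝ)/N with hc
  have hsum0 : ∑ i ∈ Finset.Icc 1 N, (x i - xbar) = 0 := by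
    rw [Finset.sum_sub_distrib, Finset.sum_const, Nat.card_Icc, hxbar]
    simp
    field_simp; simp
  set A : ℝ := (k:ℝ) * (1 - (k:ℝ)/N) with hAdef
  have hAnn : 0 ≤ A := by
    apply mul_nonneg (by positivity)
    have : (k:ℝ) / N ≤ 1 := by
      rw [div_le_one hNpos]; exact_mod_cast hkN
    linarith
  have hNk : ((N - k : ℕ) : ℝ) = (N:ℝ) - k := by
    rw [Nat.cast_sub hkN]
  have hA : ∑ i ∈ Finset.Icc 1 N, (c i) ^ 2 = A := by
    have e1 : ∑ i ∈ Finset.Ioc 0 k, (c i) ^ 2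
        = ∑ i ∈ Finset.Ioc 0 k, ((1:ℝ) - (k:ℝ)/N) ^ 2 :=
      Finset.sum_congr rfl fun i hi => by
        simp only [hc, if_pos (Finset.mem_Ioc.mp hi).2]
    have e2 : ∑ i ∈ Finset.Ioc k N, (c i) ^ 2
        = ∑ i ∈ Finset.Ioc k N, ((0:ℝ) - (k:ℝ)/N) ^ 2 :=
      Finset.sum_congr rfl fun i hi => by
        simp only [hc, if_neg (not_le.mpr (Finset.mem_Ioc.mp hi).1)]
    rw [hIcc, ← hsplit, e1, e2, Finset.sum_const, Finset.sum_const,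
      Nat.card_Ioc, Nat.card_Ioc, nsmul_eq_mul, nsmul_eq_mul]
    simp only [Nat.sub_zero, hNk, hAdef]
    field_simp
    ring
  have hT : ∑ i ∈ Finset.Icc 1 N, c i * (x i - xbar)
      = ∑ i ∈ Finset.Icc 1 k, (x i - xbar) := by
    have e1 : ∑ i ∈ Finset.Ioc 0 k, c i * (x i - xbar)
        = ∑ i ∈ Finset.Ioc 0 k,
            ((x i - xbar) - ((k:ℝ)/N) * (x i - xbar)) :=
      Finset.sum_congr rfl fun i hi => by
        simp only [hc, if_pos (Finset.mem_Ioc.mp hi).2]; ring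
    have e2 : ∑ i ∈ Finset.Ioc k N, c i * (x i - xbar)
        = ∑ i ∈ Finset.Ioc k N, (-(((k:ℝ)/N) * (x i - xbar))) :=
      Finset.sum_congr rfl fun i hi => by
        simp only [hc, if_neg (not_le.mpr (Finset.mem_Ioc.mp hi).1)]; ring
    have hz : (∑ i ∈ Finset.Ioc 0 k, (x i - xbar))
        + (∑ i ∈ Finset.Ioc k N, (x i - xbar)) = 0 := by
      rw [hsplit, ← hIcc]; exact hsum0
    have hz' : ((k:ℝ)/N) * (∑ i ∈ Finset.Ioc 0 k, (x i - xbar))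
        + ((k:ℝ)/N) * (∑ i ∈ Finset.Ioc k N, (x i - xbar)) = 0 := by
      rw [← mul_add, hz, mul_zero]
    rw [hIcc N, ← hsplit, e1, e2, hIcc k]
    rw [Finset.sum_sub_distrib, Finset.sum_neg_distrib, ← Finset.mul_sum, ← Finset.mul_sum]
    linarith
  set T := ∑ i ∈ Finset.Icc 1 k, (x i - xbar) with hTdef
  have hCS : T ^ 2 ≤ A * S := by
    rw [← hT, ← hA, hSdef]
    exact Finset.sum_mul_sq_le_sq_mul_sq _ _ _
  have hvS : ((N:ℝ) - 1) * v = S := by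
    rcases eq_or_lt_of_le hN with h1 | h2
    · have hNr : (N:ℝ) = 1 := by exact_mod_cast h1.symm
      have hS0 : S = 0 := by
        rw [hSdef]
        have hone : Finset.Icc 1 N = {1} := by rw [← h1]; rfl
        rw [hone, Finset.sum_singleton, hxbar, ← h1]
        simp
      rw [hS0, hNr]
      ring
    · have hne : (N:ℝ) - 1 ≠ 0 := by
        have : (1:ℝ) < N := by exact_mod_cast h2
        linarith
      rw [hv]
      field_simp
  have habs : |T| ≤ Real.sqrt ((k : ℝ) * (1 - (k : ℝ) / N) * ((N : ℝ) - 1) * v) := by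
    apply Real.abs_le_sqrt
    calc T ^ 2 ≤ A * S := hCS
    _ = (k : ℝ) * (1 - (k : ℝ) / N) * (((N : ℝ) - 1) * v) := by rw [hvS, hAdef]
    _ = (k : ℝ) * (1 - (k : ℝ) / N) * ((N : ℝ) - 1) * v := by ring
  have hTeq : T = (∑ i ∈ Finset.Icc 1 k, x i) - (k:ℝ) * xbar := by
    rw [hTdef, Finset.sum_sub_distrib, Finset.sum_const, Nat.card_Icc]
    simp
  rw [abs_le] at habs
  constructor
  · linarith [habs.1]
  · linarith [habs.2]
end
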